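/- If E is a finite directed graph and R is an associative unital ring, then the Leavitt path algebra L_R(E), equipped with its canonical ℤ-gradation S = ⊕_{n∈ℤ} S_n, is epsilon-strongly ℤ-graded: for every n ∈ ℤ there exist ε ∈ S_n S_{−n} and ε' ∈ S_{−n} S_n such that ε s = s and s ε' = s for all s ∈ S_n. -/

import Mathlib

namespace LPA

/-- Generators of the Leavitt path algebra: a vertex `v`, a (real) edge `f`,
or a ghost edge `f*`. -/
inductive Gen (V Ed : Type*) : Type _
  | vertex : V → Gen V Ed
  | edge : Ed → Gen V Ed
  | ghost : Ed → Gen V Ed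

/-- The free `R`-ring on the generators, with `R` commuting with the generators. -/
abbrev FreeLPA (R V Ed : Type*) [Ring R] : Type _ := MonoidAlgebra R (FreeMonoid (Gen V Ed))

noncomputable def genF (R : Type*) [Ring R] {V Ed : Type*} (x : Gen V Ed) : FreeLPA R V Ed :=
  MonoidAlgebra.of R (FreeMonoid (Gen V Ed)) (FreeMonoid.of x)

/-- The defining relations of the Leavitt path algebra of the graph with vertices `V`,
edges `Ed`, source map `sf` and range map `rf`. -/
inductive Rel (R : Type*) [Ring R] {V Ed : Type*} (sf rf : Ed → V) :
    FreeLPA R V Ed → FreeLPA R V Ed → Prop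
  | vertex_eq (v : V) :
      Rel R sf rf (genF R (Gen.vertex v) * genF R (Gen.vertex v)) (genF R (Gen.vertex v))
  | vertex_ne {v w : V} (h : v ≠ w) :
      Rel R sf rf (genF R (Gen.vertex v) * genF R (Gen.vertex w)) 0
  | src_edge (f : Ed) :
      Rel R sf rf (genF R (Gen.vertex (sf f)) * genF R (Gen.edge f)) (genF R (Gen.edge f))
  | edge_rng (f : Ed) :
      Rel R sf rf (genF R (Gen.edge f) * genF R (Gen.vertex (rf f))) (genF R (Gen.edge f))
  | rng_ghost (f : Ed) :
      Rel R sf rf (genF R (Gen.vertex (rf f)) * genF R (Gen.ghost f)) (genF R (Gen.ghost f))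
  | ghost_src (f : Ed) :
      Rel R sf rf (genF R (Gen.ghost f) * genF R (Gen.vertex (sf f))) (genF R (Gen.ghost f))
  | ghost_edge_eq (f : Ed) :
      Rel R sf rf (genF R (Gen.ghost f) * genF R (Gen.edge f)) (genF R (Gen.vertex (rf f)))
  | ghost_edge_ne {f f' : Ed} (h : f ≠ f') :
      Rel R sf rf (genF R (Gen.ghost f) * genF R (Gen.edge f')) 0
  | cuntz_krieger (v : V) (h1 : {f : Ed | sf f = v}.Nonempty) (h2 : {f : Ed | sf f = v}.Finite) :
      Rel R sf rf (∑ f ∈ h2.toFinset, genF R (Gen.edge f) * genF R (Gen.ghost f))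
        (genF R (Gen.vertex v))

/-- The Leavitt path algebra `L_R(E)` (as the ambient unital quotient ring in which the
span of the monomials `α β*` is the Leavitt path algebra). -/
abbrev LeavittPathAlgebra (R : Type*) [Ring R] {V Ed : Type*} (sf rf : Ed → V) : Type _ :=
  RingQuot (Rel R sf rf)

noncomputable def gen (R : Type*) [Ring R] {V Ed : Type*} (sf rf : Ed → V) (x : Gen V Ed) :
    LeavittPathAlgebra R sf rf :=
  RingQuot.mkRingHom (Rel R sf rf) (genF R x)

noncomputable def ofR (R : Type*) [Ring R] {V Ed : Type*} (sf rf : Ed → V) (r : R) :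
    LeavittPathAlgebra R sf rf :=
  RingQuot.mkRingHom (Rel R sf rf) (MonoidAlgebra.single (1 : FreeMonoid (Gen V Ed)) r)

/-- Paths in the directed graph. `GPath sf rf u w` are the paths with source `u`
and range `w`; a vertex is a path of length `0`. -/
inductive GPath {V Ed : Type*} (sf rf : Ed → V) : V → V → Type _
  | nil (v : V) : GPath sf rf v v
  | cons (f : Ed) {w : V} (p : GPath sf rf (rf f) w) : GPath sf rf (sf f) w

namespace GPath

def length {V Ed : Type*} {sf rf : Ed → V} : {u w : V} → GPath sf rf u w → ℕ
  | _, _, nil _ => 0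
  | _, _, cons _ p => length p + 1

def edgeList {V Ed : Type*} {sf rf : Ed → V} : {u w : V} → GPath sf rf u w → List Ed
  | _, _, nil _ => []
  | _, _, cons f p => f :: edgeList p

/-- The degree of a path with respect to a degree map `dg : Ed → G`. -/
def degree {V Ed : Type*} {sf rf : Ed → V} {G : Type*} [Group G] (dg : Ed → G) :
    {u w : V} → GPath sf rf u w → G
  | _, _, nil _ => 1
  | _, _, cons f p => dg f * degree dg p

end GPath

/-- The element `α` of `L_R(E)` associated to a path `α` (a vertex if `α` has length 0). -/
noncomputable def realElem (R : Type*) [Ring R] {V Ed : Type*} (sf rf : Ed → V) :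
    {u w : V} → GPath sf rf u w → LeavittPathAlgebra R sf rf
  | _, _, .nil v => gen R sf rf (Gen.vertex v)
  | _, _, .cons f p => gen R sf rf (Gen.edge f) * realElem R sf rf p

/-- The element `α* = α_n* ⋯ α_1*` of `L_R(E)` associated to a path `α`. -/
noncomputable def ghostElem (R : Type*) [Ring R] {V Ed : Type*} (sf rf : Ed → V) :
    {u w : V} → GPath sf rf u w → LeavittPathAlgebra R sf rf
  | _, _, .nil v => gen R sf rf (Gen.vertex v)
  | _, _, .cons f p => ghostElem R sf rf p * gen R sf rf (Gen.ghost f)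

/-- The product `AB` of two additive subgroups of a ring: the additive subgroup
generated by all products `ab`, `a ∈ A`, `b ∈ B`. -/
def sgMul {A : Type*} [NonUnitalRing A] (B C : AddSubgroup A) : AddSubgroup A :=
  AddSubgroup.closure {x | ∃ b ∈ B, ∃ c ∈ C, x = b * c}

/-- The homogeneous component `S_g` of the standard `G`-gradation of `L_R(E)` attached
to the degree map `dg : Ed → G`: the `R`-span of the monomials `α β*` with
`r(α) = r(β)` and `deg α * (deg β)⁻¹ = g`. -/
noncomputable def component (R : Type*) [Ring R] {V Ed : Type*} (sf rf : Ed → V) {G : Type*} [Group G]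
    (dg : Ed → G) (g : G) : AddSubgroup (LeavittPathAlgebra R sf rf) :=
  AddSubgroup.closure
    {x | ∃ (r : R) (u u' w : V) (α : GPath sf rf u w) (β : GPath sf rf u' w),
      α.degree dg * (β.degree dg)⁻¹ = g ∧
      x = ofR R sf rf r * (realElem R sf rf α * ghostElem R sf rf β)}

/-- The homogeneous component `S_n` of the canonical `ℤ`-gradation of `L_R(E)`:
the `R`-span of the monomials `α β*` with `r(α) = r(β)` and `l(α) - l(β) = n`. -/
noncomputable def componentZ (R : Type*) [Ring R] {V Ed : Type*} (sf rf : Ed → V) (n : ℤ) :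
    AddSubgroup (LeavittPathAlgebra R sf rf) :=
  AddSubgroup.closure
    {x | ∃ (r : R) (u u' w : V) (α : GPath sf rf u w) (β : GPath sf rf u' w),
      (α.length : ℤ) - (β.length : ℤ) = n ∧
      x = ofR R sf rf r * (realElem R sf rf α * ghostElem R sf rf β)}

-- NEW MATERIAL
section Basic
variable {R : Type*} [Ring R] {V Ed : Type*} {sf rf : Ed → V}

noncomputable def vx (sf rf : Ed → V) (v : V) : LeavittPathAlgebra R sf rf :=
  gen R sf rf (Gen.vertex v)
noncomputable def ed (sf rf : Ed → V) (f : Ed) : LeavittPathAlgebra R sf rf :=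
  gen R sf rf (Gen.edge f)
noncomputable def gh (sf rf : Ed → V) (f : Ed) : LeavittPathAlgebra R sf rf :=
  gen R sf rf (Gen.ghost f)

lemma mul_eq_of_rel {x y : FreeLPA R V Ed} (h : Rel R sf rf x y) :
    RingQuot.mkRingHom (Rel R sf rf) x = RingQuot.mkRingHom (Rel R sf rf) y :=
  RingQuot.mkRingHom_rel h

lemma gen_mul (x y : Gen V Ed) :
    gen R sf rf x * gen R sf rf y = RingQuot.mkRingHom (Rel R sf rf) (genF R x * genF R y) := by
  simp [gen, map_mul]

lemma vx_mul_vx_same (v : V) : vx sf rf v * vx sf rf v = (vx sf rf v : LeavittPathAlgebra R sf rf) := by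
  rw [vx, gen_mul, mul_eq_of_rel (Rel.vertex_eq v)]; rfl

lemma vx_mul_vx_ne {v w : V} (h : v ≠ w) : (vx sf rf v : LeavittPathAlgebra R sf rf) * vx sf rf w = 0 := by
  rw [vx, vx, gen_mul, mul_eq_of_rel (Rel.vertex_ne h), map_zero]

lemma vx_mul_ed (f : Ed) : (vx sf rf (sf f) : LeavittPathAlgebra R sf rf) * ed sf rf f = ed sf rf f := by
  rw [vx, ed, gen_mul, mul_eq_of_rel (Rel.src_edge f)]; rfl

lemma ed_mul_vx (f : Ed) : (ed sf rf f : LeavittPathAlgebra R sf rf) * vx sf rf (rf f) = ed sf rf f := by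
  rw [vx, ed, gen_mul, mul_eq_of_rel (Rel.edge_rng f)]; rfl

lemma vx_mul_gh (f : Ed) : (vx sf rf (rf f) : LeavittPathAlgebra R sf rf) * gh sf rf f = gh sf rf f := by
  rw [vx, gh, gen_mul, mul_eq_of_rel (Rel.rng_ghost f)]; rfl

lemma gh_mul_vx (f : Ed) : (gh sf rf f : LeavittPathAlgebra R sf rf) * vx sf rf (sf f) = gh sf rf f := by
  rw [vx, gh, gen_mul, mul_eq_of_rel (Rel.ghost_src f)]; rfl

lemma gh_mul_ed_same (f : Ed) : (gh sf rf f : LeavittPathAlgebra R sf rf) * ed sf rf f = vx sf rf (rf f) := by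
  rw [vx, gh, ed, gen_mul, mul_eq_of_rel (Rel.ghost_edge_eq f)]; rfl

lemma gh_mul_ed_ne {f f' : Ed} (h : f ≠ f') : (gh sf rf f : LeavittPathAlgebra R sf rf) * ed sf rf f' = 0 := by
  rw [gh, ed, gen_mul, mul_eq_of_rel (Rel.ghost_edge_ne h), map_zero]

lemma ed_mul_vx_ne {f : Ed} {v : V} (h : v ≠ rf f) :
    (ed sf rf f : LeavittPathAlgebra R sf rf) * vx sf rf v = 0 := by
  rw [← ed_mul_vx f, mul_assoc, vx_mul_vx_ne (Ne.symm h) , mul_zero]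

lemma vx_mul_ed_ne {f : Ed} {v : V} (h : v ≠ sf f) :
    (vx sf rf v : LeavittPathAlgebra R sf rf) * ed sf rf f = 0 := by
  rw [← vx_mul_ed f, ← mul_assoc, vx_mul_vx_ne h, zero_mul]

lemma gh_mul_vx_ne {f : Ed} {v : V} (h : v ≠ sf f) :
    (gh sf rf f : LeavittPathAlgebra R sf rf) * vx sf rf v = 0 := by
  rw [← gh_mul_vx f, mul_assoc, vx_mul_vx_ne (Ne.symm h), mul_zero]

lemma vx_mul_gh_ne {f : Ed} {v : V} (h : v ≠ rf f) :
    (vx sf rf v : LeavittPathAlgebra R sf rf) * gh sf rf f = 0 := by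
  rw [← vx_mul_gh f, ← mul_assoc, vx_mul_vx_ne h, zero_mul]

lemma ofR_mul_gen (r : R) (x : Gen V Ed) :
    ofR R sf rf r * gen R sf rf x = gen R sf rf x * ofR R sf rf r := by
  rw [ofR, gen, genF, ← map_mul, ← map_mul]
  congr 1
  rw [MonoidAlgebra.of_apply, MonoidAlgebra.single_mul_single, MonoidAlgebra.single_mul_single]
  simp

lemma ofR_one : (ofR R sf rf 1 : LeavittPathAlgebra R sf rf) = 1 := by
  rw [ofR, ← MonoidAlgebra.one_def, map_one]

end Basic


namespace GPath
variable {V Ed : Type*} {sf rf : Ed → V}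

def app : {u v w : V} → GPath sf rf u v → GPath sf rf v w → GPath sf rf u w
  | _, _, _, nil _, q => q
  | _, _, _, cons f p, q => cons f (app p q)

@[simp] lemma length_nil (v : V) : (nil (sf := sf) (rf := rf) v).length = 0 := rfl
@[simp] lemma length_cons (f : Ed) {w : V} (p : GPath sf rf (rf f) w) :
    (cons f p).length = p.length + 1 := rfl
@[simp] lemma edgeList_nil (v : V) : (nil (sf := sf) (rf := rf) v).edgeList = [] := rfl
@[simp] lemma edgeList_cons (f : Ed) {w : V} (p : GPath sf rf (rf f) w) :
    (cons f p).edgeList = f :: p.edgeList := rfl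

@[simp] lemma length_app : ∀ {u v w : V} (p : GPath sf rf u v) (q : GPath sf rf v w),
    (p.app q).length = p.length + q.length
  | _, _, _, nil _, q => (Nat.zero_add _).symm
  | _, _, _, cons f p, q => by simp [app, length_app p q]; omega

@[simp] lemma edgeList_app : ∀ {u v w : V} (p : GPath sf rf u v) (q : GPath sf rf v w),
    (p.app q).edgeList = p.edgeList ++ q.edgeList
  | _, _, _, nil _, q => rfl
  | _, _, _, cons f p, q => by simp [app, edgeList_app p q]

@[simp] lemma length_edgeList : ∀ {u w : V} (p : GPath sf rf u w),
    p.edgeList.length = p.length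
  | _, _, nil _ => rfl
  | _, _, cons f p => by simp [length_edgeList p]

lemma idx_eq_of_edgeList : ∀ {u u' w w' : V} (p : GPath sf rf u w) (q : GPath sf rf u' w'),
    u = u' → p.edgeList = q.edgeList →
    (⟨u, w, p⟩ : Σ (u : V) (w : V), GPath sf rf u w) = ⟨u', w', q⟩
  | _, u', _, w', nil v, q, hu, h => by
      subst hu
      cases q with
      | nil => rfl
      | cons g q' => simp [edgeList] at h
  | _, u', _, w', cons f p, q, hu, h => by
      cases q with
      | nil => simp [edgeList] at h
      | cons g q' =>
          simp only [edgeList_cons, List.cons.injEq] at h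
          obtain ⟨rfl, h2⟩ := h
          have key := idx_eq_of_edgeList p q' rfl h2
          rw [Sigma.mk.inj_iff] at key
          have key2 := eq_of_heq key.2
          rw [Sigma.mk.inj_iff] at key2
          obtain ⟨h1, h2'⟩ := key2
          subst h1
          have h3 : p = q' := eq_of_heq h2'
          subst h3; rfl

lemma tgt_eq_of_edgeList {u w w' : V} (p : GPath sf rf u w) (q : GPath sf rf u w')
    (h : p.edgeList = q.edgeList) : w = w' := by
  have := idx_eq_of_edgeList p q rfl h
  exact congrArg (fun x => x.2.1) this

end GPath

/-- index type for paths -/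
abbrev PathIdx {V Ed : Type*} (sf rf : Ed → V) := Σ (u : V) (w : V), GPath sf rf u w

lemma pathIdx_key_inj {V Ed : Type*} {sf rf : Ed → V} :
    Function.Injective (fun p : PathIdx sf rf => (p.1, p.2.2.edgeList)) := by
  rintro ⟨u, w, p⟩ ⟨u', w', q⟩ h
  simp only [Prod.mk.injEq] at h
  obtain ⟨rfl, h2⟩ := h
  exact GPath.idx_eq_of_edgeList p q rfl h2

lemma finite_pathIdx_len_le {V Ed : Type*} [Finite V] [Finite Ed] {sf rf : Ed → V} (K : ℕ) :
    {p : PathIdx sf rf | p.2.2.length ≤ K}.Finite := by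
  apply Set.Finite.of_finite_image (f := fun p : PathIdx sf rf => (p.1, p.2.2.edgeList))
  · apply Set.Finite.subset (Set.Finite.prod (Set.finite_univ (α := V))
      (List.finite_length_le Ed K))
    rintro ⟨v, l⟩ ⟨⟨u, w, p⟩, hp, heq⟩
    simp only [Prod.mk.injEq] at heq
    refine ⟨trivial, ?_⟩
    simp only [Set.mem_setOf_eq] at hp ⊢
    rw [← heq.2, GPath.length_edgeList]
    exact hp
  · exact Function.Injective.injOn pathIdx_key_inj



section PathAlg
variable {R : Type*} [Ring R] {V Ed : Type*} {sf rf : Ed → V}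

@[simp] lemma realElem_nil (v : V) :
    realElem R sf rf (GPath.nil v) = vx sf rf v := rfl
@[simp] lemma realElem_cons (f : Ed) {w : V} (p : GPath sf rf (rf f) w) :
    realElem R sf rf (GPath.cons f p) = ed sf rf f * realElem R sf rf p := rfl
@[simp] lemma ghostElem_nil (v : V) :
    ghostElem R sf rf (GPath.nil v) = vx sf rf v := rfl
@[simp] lemma ghostElem_cons (f : Ed) {w : V} (p : GPath sf rf (rf f) w) :
    ghostElem R sf rf (GPath.cons f p) = ghostElem R sf rf p * gh sf rf f := rfl

lemma vx_mul_re {u w : V} (p : GPath sf rf u w) :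
    vx sf rf u * realElem R sf rf p = realElem R sf rf p := by
  cases p with
  | nil => exact vx_mul_vx_same u
  | cons f p => rw [realElem_cons, ← mul_assoc, vx_mul_ed]

lemma vx_mul_re_ne {u w v : V} (p : GPath sf rf u w) (h : v ≠ u) :
    vx sf rf v * realElem R sf rf p = 0 := by
  cases p with
  | nil v' => exact vx_mul_vx_ne h
  | cons f p => rw [realElem_cons, ← mul_assoc, vx_mul_ed_ne h, zero_mul]

lemma re_mul_vx {u w : V} (p : GPath sf rf u w) :
    realElem R sf rf p * vx sf rf w = realElem R sf rf p := by
  induction p with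
  | nil v => exact vx_mul_vx_same v
  | cons f p ih => rw [realElem_cons, mul_assoc, ih]

lemma re_mul_vx_ne {u w v : V} (p : GPath sf rf u w) (h : v ≠ w) :
    realElem R sf rf p * vx sf rf v = 0 := by
  induction p with
  | nil w' => exact vx_mul_vx_ne (Ne.symm h)
  | cons f p ih => rw [realElem_cons, mul_assoc, ih h, mul_zero]

lemma vx_mul_gE {u w : V} (p : GPath sf rf u w) :
    vx sf rf w * ghostElem R sf rf p = ghostElem R sf rf p := by
  induction p with
  | nil v => exact vx_mul_vx_same v
  | cons f p ih => rw [ghostElem_cons, ← mul_assoc, ih]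

lemma vx_mul_gE_ne {u w v : V} (p : GPath sf rf u w) (h : v ≠ w) :
    vx sf rf v * ghostElem R sf rf p = 0 := by
  induction p with
  | nil w' => exact vx_mul_vx_ne h
  | cons f p ih => rw [ghostElem_cons, ← mul_assoc, ih h, zero_mul]

lemma gE_mul_vx {u w : V} (p : GPath sf rf u w) :
    ghostElem R sf rf p * vx sf rf u = ghostElem R sf rf p := by
  cases p with
  | nil => exact vx_mul_vx_same u
  | cons f p => rw [ghostElem_cons, mul_assoc, gh_mul_vx]

lemma gE_mul_vx_ne {u w v : V} (p : GPath sf rf u w) (h : v ≠ u) :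
    ghostElem R sf rf p * vx sf rf v = 0 := by
  cases p with
  | nil w' => exact vx_mul_vx_ne (Ne.symm h)
  | cons f p => rw [ghostElem_cons, mul_assoc, gh_mul_vx_ne h, mul_zero]

lemma gE_mul_re_self {u w : V} (p : GPath sf rf u w) :
    ghostElem R sf rf p * realElem R sf rf p = vx sf rf w := by
  induction p with
  | nil v => exact vx_mul_vx_same v
  | cons f p ih =>
      rw [ghostElem_cons, realElem_cons, mul_assoc, ← mul_assoc (gh sf rf f),
        gh_mul_ed_same, vx_mul_re, ih]

lemma re_app {u v w : V} (p : GPath sf rf u v) (q : GPath sf rf v w) :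
    realElem R sf rf (p.app q) = realElem R sf rf p * realElem R sf rf q := by
  induction p with
  | nil v' =>
      rw [show (GPath.nil v').app q = q from rfl, realElem_nil, vx_mul_re]
  | cons f p ih =>
      rw [show (GPath.cons f p).app q = GPath.cons f (p.app q) from rfl,
        realElem_cons, realElem_cons, ih, mul_assoc]

lemma gE_app {u v w : V} (p : GPath sf rf u v) (q : GPath sf rf v w) :
    ghostElem R sf rf (p.app q) = ghostElem R sf rf q * ghostElem R sf rf p := by
  induction p with
  | nil v' =>
      rw [show (GPath.nil v').app q = q from rfl, ghostElem_nil, gE_mul_vx]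
  | cons f p ih =>
      rw [show (GPath.cons f p).app q = GPath.cons f (p.app q) from rfl,
        ghostElem_cons, ghostElem_cons, ih, mul_assoc]

lemma gE_mul_re_app {u v w : V} (p : GPath sf rf u v) (q : GPath sf rf v w) :
    ghostElem R sf rf p * realElem R sf rf (p.app q) = realElem R sf rf q := by
  rw [re_app, ← mul_assoc, gE_mul_re_self, vx_mul_re]

lemma gE_app_mul_re {u v w : V} (p : GPath sf rf u v) (q : GPath sf rf v w) :
    ghostElem R sf rf (p.app q) * realElem R sf rf p = ghostElem R sf rf q := by
  rw [gE_app, mul_assoc, gE_mul_re_self, gE_mul_vx]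

lemma gE_mul_re_cases {u w : V} (p : GPath sf rf u w) : ∀ {u' w' : V} (q : GPath sf rf u' w'),
    ghostElem R sf rf p * realElem R sf rf q = 0 ∨
    (∃ τ : GPath sf rf w w', ghostElem R sf rf p * realElem R sf rf q = realElem R sf rf τ ∧
      q.edgeList = p.edgeList ++ τ.edgeList) ∨
    (∃ τ : GPath sf rf w' w, ghostElem R sf rf p * realElem R sf rf q = ghostElem R sf rf τ ∧
      p.edgeList = q.edgeList ++ τ.edgeList) := by
  induction p with
  | nil v =>
      intro u' w' q
      rcases eq_or_ne u' v with h | h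
      · subst h
        right; left
        exact ⟨q, by rw [ghostElem_nil, vx_mul_re], by simp⟩
      · left
        rw [ghostElem_nil]
        exact vx_mul_re_ne q (Ne.symm h)
  | cons f p ih =>
      intro u' w' q
      cases q with
      | nil =>
          rcases eq_or_ne u' (sf f) with h | h
          · subst h
            right; right
            exact ⟨GPath.cons f p, by rw [realElem_nil]; exact gE_mul_vx _, by simp⟩
          · left
            rw [realElem_nil]
            exact gE_mul_vx_ne _ h
      | cons g q' =>
          rcases eq_or_ne f g with h | h
          · subst h
            have key : ghostElem R sf rf (GPath.cons f p) * realElem R sf rf (GPath.cons f q') =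
                ghostElem R sf rf p * realElem R sf rf q' := by
              rw [ghostElem_cons, realElem_cons, mul_assoc, ← mul_assoc (gh sf rf f),
                gh_mul_ed_same, vx_mul_re]
            rcases ih q' with h0 | ⟨τ, hτ, hl⟩ | ⟨τ, hτ, hl⟩
            · left; rw [key, h0]
            · right; left; exact ⟨τ, by rw [key, hτ], by simp [hl]⟩
            · right; right; exact ⟨τ, by rw [key, hτ], by simp [hl]⟩
          · left
            rw [ghostElem_cons, realElem_cons, mul_assoc, ← mul_assoc (gh sf rf f),
              gh_mul_ed_ne h, zero_mul, mul_zero]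

lemma path_split {u w : V} (p : GPath sf rf u w) (k : ℕ) (hk : k ≤ p.length) :
    ∃ (v : V) (p₁ : GPath sf rf u v) (p₂ : GPath sf rf v w),
      p₁.length = k ∧ p₁.edgeList = p.edgeList.take k ∧ p = p₁.app p₂ := by
  induction p generalizing k with
  | nil v =>
      have : k = 0 := Nat.le_zero.mp hk
      subst this
      exact ⟨v, GPath.nil v, GPath.nil v, rfl, by simp, rfl⟩
  | cons f p ih =>
      cases k with
      | zero => exact ⟨sf f, GPath.nil (sf f), GPath.cons f p, rfl, by simp, rfl⟩
      | succ k =>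
          obtain ⟨v, p₁, p₂, h1, h2, h3⟩ := ih k (by simpa using hk)
          refine ⟨v, GPath.cons f p₁, p₂, by simp [h1], by simp [h2], ?_⟩
          rw [show (GPath.cons f p₁).app p₂ = GPath.cons f (p₁.app p₂) from rfl, ← h3]

lemma ofR_mul_re {u w : V} (r : R) (p : GPath sf rf u w) :
    ofR R sf rf r * realElem R sf rf p = realElem R sf rf p * ofR R sf rf r := by
  induction p with
  | nil v => exact ofR_mul_gen r _
  | cons f p ih =>
      rw [realElem_cons, ← mul_assoc,
        show ofR R sf rf r * ed sf rf f = ed sf rf f * ofR R sf rf r from ofR_mul_gen r _,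
        mul_assoc, ih, mul_assoc]

lemma ofR_mul_gE {u w : V} (r : R) (p : GPath sf rf u w) :
    ofR R sf rf r * ghostElem R sf rf p = ghostElem R sf rf p * ofR R sf rf r := by
  induction p with
  | nil v => exact ofR_mul_gen r _
  | cons f p ih =>
      rw [ghostElem_cons, ← mul_assoc, ih, mul_assoc,
        show ofR R sf rf r * gh sf rf f = gh sf rf f * ofR R sf rf r from ofR_mul_gen r _,
        ← mul_assoc]

end PathAlg



namespace GPath
variable {V Ed : Type*} {sf rf : Ed → V}

@[simp] lemma app_nil : ∀ {u w : V} (p : GPath sf rf u w), p.app (nil w) = p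
  | _, _, nil v => rfl
  | _, _, cons f p => by rw [show (cons f p).app (nil _) = cons f (p.app (nil _)) from rfl,
      app_nil p]

lemma app_assoc : ∀ {u v w x : V} (p : GPath sf rf u v) (q : GPath sf rf v w)
    (t : GPath sf rf w x), (p.app q).app t = p.app (q.app t)
  | _, _, _, _, nil _, q, t => rfl
  | _, _, _, _, cons f p, q, t => by
      rw [show (cons f p).app q = cons f (p.app q) from rfl,
        show (cons f (p.app q)).app t = cons f ((p.app q).app t) from rfl,
        app_assoc p q t,
        show (cons f p).app (q.app t) = cons f (p.app (q.app t)) from rfl]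

def pow {v : V} (c : GPath sf rf v v) : ℕ → GPath sf rf v v
  | 0 => nil v
  | t + 1 => c.app (pow c t)

@[simp] lemma length_pow {v : V} (c : GPath sf rf v v) (t : ℕ) :
    (c.pow t).length = t * c.length := by
  induction t with
  | zero => simp [pow]
  | succ t ih => rw [pow, length_app, ih]; ring

def castTgt {u w w' : V} (h : w = w') (p : GPath sf rf u w) : GPath sf rf u w' := h ▸ p

@[simp] lemma length_castTgt {u w w' : V} (h : w = w') (p : GPath sf rf u w) :
    (castTgt h p).length = p.length := by subst h; rfl

end GPath

section Good
variable {V Ed : Type*} {sf rf : Ed → V}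

/-- There is a path of length `L` into `v`. -/
def Good (sf rf : Ed → V) (L : ℕ) (v : V) : Prop :=
  ∃ (u : V) (q : GPath sf rf u v), q.length = L

lemma Good.mono {L k : ℕ} {v : V} (h : Good sf rf L v) (hk : k ≤ L) : Good sf rf k v := by
  obtain ⟨u, q, hq⟩ := h
  obtain ⟨v', p₁, p₂, h1, _, h3⟩ := path_split q (L - k) (by omega)
  refine ⟨v', p₂, ?_⟩
  have := congrArg GPath.length h3
  rw [GPath.length_app] at this
  omega

/-- Minimal good paths: `p` is good (for shift `m`), but no proper prefix of `p` is good. -/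
def Mingood (sf rf : Ed → V) (m : ℕ) : Set (PathIdx sf rf) :=
  {p | Good sf rf (p.2.2.length + m) p.2.1 ∧
    ∀ (w₂ : V) (q : GPath sf rf p.1 w₂), q.edgeList = p.2.2.edgeList.take q.length →
      q.length < p.2.2.length → ¬ Good sf rf (q.length + m) w₂}

lemma mingood_length_le [Finite V] {m : ℕ} {p : PathIdx sf rf}
    (hp : p ∈ Mingood sf rf m) : p.2.2.length ≤ Nat.card V := by
  obtain ⟨u, w, pp⟩ := p
  obtain ⟨hgood, hmin⟩ := hp
  dsimp only at hgood hmin ⊢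
  by_contra hlen
  push_neg at hlen
  set K := Nat.card V with hK
  have hsp : ∀ i : Fin (K + 1), ∃ (v : V) (p₁ : GPath sf rf u v) (p₂ : GPath sf rf v w),
      p₁.length = (i : ℕ) ∧ p₁.edgeList = pp.edgeList.take (i : ℕ) ∧ pp = p₁.app p₂ :=
    fun i => path_split pp i (by have := i.2; omega)
  choose fv p1 p2 hlen1 htake1 happ1 using hsp
  have : Fintype V := Fintype.ofFinite V
  have hcard : Fintype.card V < Fintype.card (Fin (K + 1)) := by
    simp [hK, Nat.card_eq_fintype_card]
  obtain ⟨i, j, hne, hfeq⟩ := Fintype.exists_ne_map_eq_of_card_lt fv hcard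
  have hvne : (i : ℕ) ≠ (j : ℕ) := fun h => hne (Fin.ext h)
  wlog hij : (i : ℕ) < (j : ℕ) generalizing i j
  · exact this j i (Ne.symm hne) hfeq.symm (Ne.symm hvne) (by omega)
  obtain ⟨v2, a, c, ha1, ha2, ha3⟩ := path_split (p1 j) i (by rw [hlen1 j]; exact le_of_lt hij)
  have hv2 : v2 = fv i := by
    apply GPath.tgt_eq_of_edgeList a (p1 i)
    rw [ha2, htake1 j, htake1 i, List.take_take]
    congr 1
    omega
  subst hv2
  have hclen : c.length = (j : ℕ) - (i : ℕ) := by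
    have := congrArg GPath.length ha3
    rw [GPath.length_app, hlen1 j, ha1] at this
    omega
  -- close the cycle
  let c' : GPath sf rf (fv i) (fv i) := GPath.castTgt hfeq.symm c
  have hc'len : c'.length = (j : ℕ) - (i : ℕ) := by
    rw [GPath.length_castTgt, hclen]
  have hgoodI : Good sf rf ((i : ℕ) + m) (fv i) := by
    apply Good.mono (L := (a.app (c'.pow m)).length) ⟨u, a.app (c'.pow m), rfl⟩
    rw [GPath.length_app, GPath.length_pow, ha1, hc'len]
    have h1 : 1 ≤ (j : ℕ) - (i : ℕ) := by omega
    nlinarith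
  -- contradiction with minimality at prefix i
  have hni := hmin (fv i) (p1 i)
    (by rw [hlen1 i]; exact htake1 i) (by rw [hlen1 i]; omega)
  rw [hlen1 i] at hni
  exact hni hgoodI

lemma exists_mingood_prefix {m : ℕ} {u w : V} (β : GPath sf rf u w)
    (hg : Good sf rf (β.length + m) w) :
    ∃ (w₂ : V) (β₁ : GPath sf rf u w₂) (σ : GPath sf rf w₂ w),
      (⟨u, w₂, β₁⟩ : PathIdx sf rf) ∈ Mingood sf rf m ∧ β = β₁.app σ := by
  suffices H : ∀ (N : ℕ) {u w : V} (β : GPath sf rf u w), β.length ≤ N →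
      Good sf rf (β.length + m) w →
      ∃ (w₂ : V) (β₁ : GPath sf rf u w₂) (σ : GPath sf rf w₂ w),
        (⟨u, w₂, β₁⟩ : PathIdx sf rf) ∈ Mingood sf rf m ∧ β = β₁.app σ by
    exact H β.length β le_rfl hg
  intro N
  induction N with
  | zero =>
      intro u w β hβ hgood
      refine ⟨w, β, GPath.nil w, ⟨hgood, ?_⟩, (GPath.app_nil β).symm⟩
      dsimp only
      intro w₂ q _ hlt
      omega
  | succ N IH =>
      intro u w β hβ hgood
      by_cases hmin : (⟨u, w, β⟩ : PathIdx sf rf) ∈ Mingood sf rf m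
      · exact ⟨w, β, GPath.nil w, hmin, (GPath.app_nil β).symm⟩
      · have h2 : ¬ ∀ (w₂ : V) (q : GPath sf rf u w₂),
            q.edgeList = β.edgeList.take q.length → q.length < β.length →
            ¬ Good sf rf (q.length + m) w₂ := fun hall => hmin ⟨hgood, hall⟩
        push_neg at h2
        obtain ⟨w₂, q, hq, hlt, hgood2⟩ := h2
        obtain ⟨v, β₁, σ, hlen, htake, happ⟩ := path_split β q.length (le_of_lt hlt)
        have hv : v = w₂ := GPath.tgt_eq_of_edgeList β₁ q (by rw [htake, hq])
        subst hv
        have hβ₁ : β₁.length = q.length := hlen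
        have hgood3 : Good sf rf (β₁.length + m) v := by rw [hβ₁]; exact hgood2
        obtain ⟨w₃, γ, σ', hmem, happ'⟩ := IH β₁ (by omega) hgood3
        exact ⟨w₃, γ, σ'.app σ, hmem, by rw [happ, happ', GPath.app_assoc]⟩

end Good


section Elements
variable {R : Type*} [Ring R] {V Ed : Type*} {sf rf : Ed → V}

-- z-extended (right-associated) rewriting helpers
lemma gE_re_z {u w : V} (p : GPath sf rf u w) (z : LeavittPathAlgebra R sf rf) :
    ghostElem R sf rf p * (realElem R sf rf p * z) = vx sf rf w * z := by
  rw [← mul_assoc, gE_mul_re_self]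

lemma vx_re_z {u w : V} (p : GPath sf rf u w) (z : LeavittPathAlgebra R sf rf) :
    vx sf rf u * (realElem R sf rf p * z) = realElem R sf rf p * z := by
  rw [← mul_assoc, vx_mul_re]

lemma vx_gE_z {u w : V} (p : GPath sf rf u w) (z : LeavittPathAlgebra R sf rf) :
    vx sf rf w * (ghostElem R sf rf p * z) = ghostElem R sf rf p * z := by
  rw [← mul_assoc, vx_mul_gE]

lemma ofR_swap {r : R} {x y : LeavittPathAlgebra R sf rf}
    (hx : ofR R sf rf r * x = x * ofR R sf rf r) :
    x * (ofR R sf rf r * y) = ofR R sf rf r * (x * y) := by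
  rw [← mul_assoc, ← hx, mul_assoc]

lemma ofR_mul_re_gE {r : R} {u w u' w' : V} (p : GPath sf rf u w) (q : GPath sf rf u' w') :
    ofR R sf rf r * (realElem R sf rf p * ghostElem R sf rf q)
      = (realElem R sf rf p * ghostElem R sf rf q) * ofR R sf rf r := by
  rw [← mul_assoc, ofR_mul_re, mul_assoc, ofR_mul_gE, ← mul_assoc]

-- membership lemmas
lemma mem_componentZ {n : ℤ} (r : R) {u u' w : V} (α : GPath sf rf u w) (β : GPath sf rf u' w)
    (h : (α.length : ℤ) - β.length = n) :
    ofR R sf rf r * (realElem R sf rf α * ghostElem R sf rf β) ∈ componentZ R sf rf n :=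
  AddSubgroup.subset_closure ⟨r, u, u', w, α, β, h, rfl⟩

lemma mem_componentZ' {n : ℤ} {u u' w : V} (α : GPath sf rf u w) (β : GPath sf rf u' w)
    (h : (α.length : ℤ) - β.length = n) :
    realElem R sf rf α * ghostElem R sf rf β ∈ componentZ R sf rf n := by
  have := mem_componentZ (R := R) 1 α β h
  rwa [ofR_one, one_mul] at this

lemma re_mem {u w : V} (p : GPath sf rf u w) :
    realElem R sf rf p ∈ componentZ R sf rf (p.length : ℤ) := by
  have := mem_componentZ' (R := R) (n := (p.length : ℤ)) p (GPath.nil w) (by simp)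
  rwa [ghostElem_nil, re_mul_vx] at this

lemma gE_mem {u w : V} (p : GPath sf rf u w) :
    ghostElem R sf rf p ∈ componentZ R sf rf (-(p.length : ℤ)) := by
  have := mem_componentZ' (R := R) (n := -(p.length : ℤ)) (GPath.nil w) p (by simp)
  rwa [realElem_nil, vx_mul_gE] at this

lemma mem_sgMul {A : Type*} [NonUnitalRing A] {B C : AddSubgroup A} {b c : A}
    (hb : b ∈ B) (hc : c ∈ C) : b * c ∈ sgMul B C :=
  AddSubgroup.subset_closure ⟨b, hb, c, hc, rfl⟩

-- closure induction helpers
lemma left_unit_on {n : ℤ} (ε : LeavittPathAlgebra R sf rf)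
    (h : ∀ (r : R) (u u' w : V) (α : GPath sf rf u w) (β : GPath sf rf u' w),
      (α.length : ℤ) - β.length = n →
      ε * (ofR R sf rf r * (realElem R sf rf α * ghostElem R sf rf β))
        = ofR R sf rf r * (realElem R sf rf α * ghostElem R sf rf β)) :
    ∀ s ∈ componentZ R sf rf n, ε * s = s := by
  intro s hs
  exact AddSubgroup.closure_induction
    (fun x hx => by
      obtain ⟨r, u, u', w, α, β, hd, rfl⟩ := hx
      exact h r u u' w α β hd)
    (mul_zero ε)
    (fun x y _ _ hx hy => by rw [mul_add, hx, hy])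
    (fun x _ hx => (mul_neg ε x).trans (congrArg Neg.neg hx)) hs

lemma right_unit_on {n : ℤ} (ε : LeavittPathAlgebra R sf rf)
    (h : ∀ (r : R) (u u' w : V) (α : GPath sf rf u w) (β : GPath sf rf u' w),
      (α.length : ℤ) - β.length = n →
      (ofR R sf rf r * (realElem R sf rf α * ghostElem R sf rf β)) * ε
        = ofR R sf rf r * (realElem R sf rf α * ghostElem R sf rf β)) :
    ∀ s ∈ componentZ R sf rf n, s * ε = s := by
  intro s hs
  exact AddSubgroup.closure_induction
    (fun x hx => by
      obtain ⟨r, u, u', w, α, β, hd, rfl⟩ := hx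
      exact h r u u' w α β hd)
    (zero_mul ε)
    (fun x y _ _ hx hy => by rw [add_mul, hx, hy])
    (fun x _ hx => (neg_mul x ε).trans (congrArg Neg.neg hx)) hs

end Elements

section Sums
variable (R : Type*) [Ring R] {V Ed : Type*} [Finite V] [Finite Ed] (sf rf : Ed → V)

noncomputable def EmSet (m : ℕ) : Finset (PathIdx sf rf) :=
  Set.Finite.toFinset (s := {p : PathIdx sf rf | p.2.2.length = m})
    ((finite_pathIdx_len_le (sf := sf) (rf := rf) m).subset (fun p hp => le_of_eq hp))

noncomputable def FmSet (m : ℕ) : Finset (PathIdx sf rf) :=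
  Set.Finite.toFinset (s := Mingood sf rf m)
    ((finite_pathIdx_len_le (sf := sf) (rf := rf) (Nat.card V)).subset
    (fun _ hp => mingood_length_le hp))

lemma mem_EmSet {m : ℕ} {p : PathIdx sf rf} : p ∈ EmSet sf rf m ↔ p.2.2.length = m := by
  simp [EmSet]

lemma mem_FmSet {m : ℕ} {p : PathIdx sf rf} : p ∈ FmSet sf rf m ↔ p ∈ Mingood sf rf m := by
  simp [FmSet]

noncomputable def EmEl (m : ℕ) : LeavittPathAlgebra R sf rf :=
  ∑ p ∈ EmSet sf rf m, realElem R sf rf p.2.2 * ghostElem R sf rf p.2.2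

noncomputable def FmEl (m : ℕ) : LeavittPathAlgebra R sf rf :=
  ∑ p ∈ FmSet sf rf m, realElem R sf rf p.2.2 * ghostElem R sf rf p.2.2

lemma EmEl_mem (m : ℕ) :
    EmEl R sf rf m ∈ sgMul (componentZ R sf rf (m : ℤ)) (componentZ R sf rf (-(m : ℤ))) := by
  apply AddSubgroup.sum_mem
  intro p hp
  rw [mem_EmSet] at hp
  exact mem_sgMul (hp ▸ re_mem p.2.2) (hp ▸ gE_mem p.2.2)

lemma FmEl_mem (m : ℕ) :
    FmEl R sf rf m ∈ sgMul (componentZ R sf rf (-(m : ℤ))) (componentZ R sf rf (m : ℤ)) := by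
  apply AddSubgroup.sum_mem
  intro p hp
  rw [mem_FmSet] at hp
  obtain ⟨u, w, pp⟩ := p
  obtain ⟨hgood, -⟩ := hp
  have hgood' : Good sf rf (pp.length + m) w := hgood
  obtain ⟨uq, q, hq⟩ := hgood' 
  have key : realElem R sf rf pp * ghostElem R sf rf pp =
      (realElem R sf rf pp * ghostElem R sf rf q) * (realElem R sf rf q * ghostElem R sf rf pp) := by
    rw [mul_assoc, gE_re_z, vx_mul_gE]
  rw [key]
  exact mem_sgMul
    (mem_componentZ' pp q (by simp only [hq]; push_cast; ring))
    (mem_componentZ' q pp (by simp only [hq]; push_cast; ring))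

end Sums


section Separation
variable {R : Type*} [Ring R] {V Ed : Type*} {sf rf : Ed → V}

lemma take_edgeList_app {u v w : V} (p : GPath sf rf u v) (q : GPath sf rf v w) :
    ((p.app q).edgeList).take p.length = p.edgeList := by
  rw [GPath.edgeList_app, ← GPath.length_edgeList p]
  exact List.take_left

lemma edgeList_eq_nil {u w : V} {p : GPath sf rf u w} (h : p.length = 0) :
    p.edgeList = [] := by
  have : p.edgeList.length = 0 := by rw [GPath.length_edgeList]; exact h
  exact List.length_eq_zero_iff.mp this

lemma emleft_zero {m : ℕ} {ub wb u v w' : V} (pb : GPath sf rf ub wb) (hpb : pb.length = m)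
    (α₁ : GPath sf rf u v) (α₂ : GPath sf rf v w') (h1 : α₁.length = m)
    (hne : (⟨ub, wb, pb⟩ : PathIdx sf rf) ≠ ⟨u, v, α₁⟩) :
    ghostElem R sf rf pb * realElem R sf rf (α₁.app α₂) = 0 := by
  by_cases hu : ub = u
  · subst hu
    rcases gE_mul_re_cases (R := R) pb (α₁.app α₂) with h0 | ⟨τ, hτ, hl⟩ | ⟨τ, hτ, hl⟩
    · exact h0
    · exfalso
      apply hne
      apply GPath.idx_eq_of_edgeList pb α₁ rfl
      have h2 : ((α₁.app α₂).edgeList).take m = pb.edgeList := by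
        rw [hl, ← hpb, ← GPath.length_edgeList pb]
        exact List.take_left
      rw [← h2, ← h1, take_edgeList_app]
    · exfalso
      apply hne
      apply GPath.idx_eq_of_edgeList pb α₁ rfl
      have hlen := congrArg List.length hl
      simp only [List.length_append, GPath.length_edgeList, GPath.length_app] at hlen
      have hα₂ : α₂.edgeList = [] := edgeList_eq_nil (by omega)
      have hτ' : τ.edgeList = [] := edgeList_eq_nil (by omega)
      rw [hl, GPath.edgeList_app, hα₂, hτ']
      simp
  · rw [← vx_mul_re (R := R) (α₁.app α₂), ← mul_assoc, gE_mul_vx_ne _ (Ne.symm hu), zero_mul]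

lemma emright_zero {m : ℕ} {u' v w ub wb : V} (β₁ : GPath sf rf u' v) (β₂ : GPath sf rf v w)
    (h1 : β₁.length = m) (pb : GPath sf rf ub wb) (hpb : pb.length = m)
    (hne : (⟨ub, wb, pb⟩ : PathIdx sf rf) ≠ ⟨u', v, β₁⟩) :
    ghostElem R sf rf (β₁.app β₂) * realElem R sf rf pb = 0 := by
  by_cases hu : ub = u'
  · subst hu
    rcases gE_mul_re_cases (R := R) (β₁.app β₂) pb with h0 | ⟨τ, hτ, hl⟩ | ⟨τ, hτ, hl⟩
    · exact h0
    · exfalso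
      apply hne
      apply GPath.idx_eq_of_edgeList pb β₁ rfl
      have hlen := congrArg List.length hl
      simp only [List.length_append, GPath.length_edgeList, GPath.length_app] at hlen
      have hβ₂ : β₂.edgeList = [] := edgeList_eq_nil (by omega)
      have hτ' : τ.edgeList = [] := edgeList_eq_nil (by omega)
      rw [hl, GPath.edgeList_app, hβ₂, hτ']
      simp
    · exfalso
      apply hne
      apply GPath.idx_eq_of_edgeList pb β₁ rfl
      have h2 : ((β₁.app β₂).edgeList).take m = pb.edgeList := by
        rw [hl, ← hpb, ← GPath.length_edgeList pb]
        exact List.take_left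
      rw [← h2, ← h1, take_edgeList_app]
  · rw [← vx_mul_re (R := R) pb, ← mul_assoc, gE_mul_vx_ne _ hu, zero_mul]

lemma diverge1 {m : ℕ} {u' w₂ w wb : V} (β₁ : GPath sf rf u' w₂) (σ : GPath sf rf w₂ w)
    (pb : GPath sf rf u' wb)
    (hmem : (⟨u', w₂, β₁⟩ : PathIdx sf rf) ∈ Mingood sf rf m)
    (hb : (⟨u', wb, pb⟩ : PathIdx sf rf) ∈ Mingood sf rf m)
    (hne : (⟨u', wb, pb⟩ : PathIdx sf rf) ≠ ⟨u', w₂, β₁⟩)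
    (hg : Good sf rf ((β₁.app σ).length + m) w)
    (l : List Ed) (hl : pb.edgeList = (β₁.app σ).edgeList ++ l) : False := by
  have hlen : pb.length = (β₁.app σ).length + l.length := by
    have h := congrArg List.length hl
    simp only [List.length_append, GPath.length_edgeList] at h
    omega
  rcases Nat.eq_zero_or_pos l.length with h0 | h0
  · -- pb has the same key as β₁.app σ
    have hlnil : l = [] := List.length_eq_zero_iff.mp h0
    have hkey : (⟨u', wb, pb⟩ : PathIdx sf rf) = ⟨u', w, β₁.app σ⟩ :=
      GPath.idx_eq_of_edgeList pb (β₁.app σ) rfl (by rw [hl, hlnil, List.append_nil])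
    rcases Nat.lt_or_ge β₁.length (β₁.app σ).length with hlt | hge
    · exact hb.2 w₂ β₁
        (by show β₁.edgeList = pb.edgeList.take β₁.length
            rw [hl, hlnil, List.append_nil, take_edgeList_app])
        (by show β₁.length < pb.length; omega) hmem.1
    · have hσ : σ.edgeList = [] := by
        have := GPath.length_app β₁ σ
        exact edgeList_eq_nil (by omega)
      have hkey2 : (⟨u', w, β₁.app σ⟩ : PathIdx sf rf) = ⟨u', w₂, β₁⟩ :=
        GPath.idx_eq_of_edgeList _ β₁ rfl (by rw [GPath.edgeList_app, hσ, List.append_nil])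
      exact hne (hkey.trans hkey2)
  · exact hb.2 w (β₁.app σ)
      (by show (β₁.app σ).edgeList = pb.edgeList.take (β₁.app σ).length
          rw [hl, ← GPath.length_edgeList (β₁.app σ), List.take_left])
      (by show (β₁.app σ).length < pb.length; omega) hg

lemma diverge2 {m : ℕ} {u' w₂ w wb : V} (β₁ : GPath sf rf u' w₂) (σ : GPath sf rf w₂ w)
    (pb : GPath sf rf u' wb)
    (hmem : (⟨u', w₂, β₁⟩ : PathIdx sf rf) ∈ Mingood sf rf m)
    (hb : (⟨u', wb, pb⟩ : PathIdx sf rf) ∈ Mingood sf rf m)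
    (hne : (⟨u', wb, pb⟩ : PathIdx sf rf) ≠ ⟨u', w₂, β₁⟩)
    (l : List Ed) (hl : (β₁.app σ).edgeList = pb.edgeList ++ l) : False := by
  have hlen : (β₁.app σ).length = pb.length + l.length := by
    have := congrArg List.length hl
    simpa using this
  have happlen : (β₁.app σ).length = β₁.length + σ.length := GPath.length_app β₁ σ
  have htakepb : pb.edgeList = ((β₁.app σ).edgeList).take pb.length := by
    rw [hl, ← GPath.length_edgeList pb, List.take_left]
  rcases le_or_gt pb.length β₁.length with hle | hlt
  · have htake2 : pb.edgeList = (β₁.edgeList).take pb.length := by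
      rw [htakepb, GPath.edgeList_app, List.take_append_of_le_length
        (by rw [GPath.length_edgeList]; exact hle)]
    rcases Nat.lt_or_ge pb.length β₁.length with hlt2 | hge2
    · exact hmem.2 wb pb htake2 hlt2 hb.1
    · have heq : pb.length = β₁.length := le_antisymm hle hge2
      have : pb.edgeList = β₁.edgeList := by
        rw [htake2, heq, ← GPath.length_edgeList β₁, List.take_length]
      exact hne (GPath.idx_eq_of_edgeList pb β₁ rfl this)
  · have htake3 : β₁.edgeList = (pb.edgeList).take β₁.length := by
      have e1 : β₁.edgeList = ((β₁.app σ).edgeList).take β₁.length :=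
        (take_edgeList_app β₁ σ).symm
      rw [e1, hl, List.take_append_of_le_length
        (by rw [GPath.length_edgeList]; omega)]
    exact hb.2 w₂ β₁ htake3 hlt hmem.1

lemma fmright_zero {m : ℕ} {u' w₂ w ub wb : V} {β₁ : GPath sf rf u' w₂} {σ : GPath sf rf w₂ w}
    (hmem : (⟨u', w₂, β₁⟩ : PathIdx sf rf) ∈ Mingood sf rf m)
    {pb : GPath sf rf ub wb} (hb : (⟨ub, wb, pb⟩ : PathIdx sf rf) ∈ Mingood sf rf m)
    (hne : (⟨ub, wb, pb⟩ : PathIdx sf rf) ≠ ⟨u', w₂, β₁⟩)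
    (hg : Good sf rf ((β₁.app σ).length + m) w) :
    ghostElem R sf rf (β₁.app σ) * realElem R sf rf pb = 0 := by
  by_cases hu : ub = u'
  · subst hu
    rcases gE_mul_re_cases (R := R) (β₁.app σ) pb with h0 | ⟨τ, hτ, hl⟩ | ⟨τ, hτ, hl⟩
    · exact h0
    · exact absurd hl (fun hl => diverge1 β₁ σ pb hmem hb hne hg τ.edgeList hl)
    · exact absurd hl (fun hl => diverge2 β₁ σ pb hmem hb hne τ.edgeList hl)
  · rw [← vx_mul_re (R := R) pb, ← mul_assoc, gE_mul_vx_ne _ hu, zero_mul]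

lemma fmleft_zero {m : ℕ} {u' w₂ w ub wb : V} {α₁ : GPath sf rf u' w₂} {σ : GPath sf rf w₂ w}
    (hmem : (⟨u', w₂, α₁⟩ : PathIdx sf rf) ∈ Mingood sf rf m)
    {pb : GPath sf rf ub wb} (hb : (⟨ub, wb, pb⟩ : PathIdx sf rf) ∈ Mingood sf rf m)
    (hne : (⟨ub, wb, pb⟩ : PathIdx sf rf) ≠ ⟨u', w₂, α₁⟩)
    (hg : Good sf rf ((α₁.app σ).length + m) w) :
    ghostElem R sf rf pb * realElem R sf rf (α₁.app σ) = 0 := by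
  by_cases hu : ub = u'
  · subst hu
    rcases gE_mul_re_cases (R := R) pb (α₁.app σ) with h0 | ⟨τ, hτ, hl⟩ | ⟨τ, hτ, hl⟩
    · exact h0
    · exact absurd hl (fun hl => diverge2 α₁ σ pb hmem hb hne τ.edgeList hl)
    · exact absurd hl (fun hl => diverge1 α₁ σ pb hmem hb hne hg τ.edgeList hl)
  · rw [← vx_mul_re (R := R) (α₁.app σ), ← mul_assoc, gE_mul_vx_ne _ (Ne.symm hu), zero_mul]

lemma absorb_left {u v w : V} (α₁ : GPath sf rf u v) (α₂ : GPath sf rf v w)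
    (y : LeavittPathAlgebra R sf rf) :
    (realElem R sf rf α₁ * ghostElem R sf rf α₁) * (realElem R sf rf (α₁.app α₂) * y)
      = realElem R sf rf (α₁.app α₂) * y := by
  rw [re_app, mul_assoc (realElem R sf rf α₁) (realElem R sf rf α₂),
    mul_assoc (realElem R sf rf α₁) (ghostElem R sf rf α₁), gE_re_z, vx_re_z,
    ← mul_assoc (realElem R sf rf α₁) (realElem R sf rf α₂)]

lemma absorb_right {u' v w : V} (β₁ : GPath sf rf u' v) (β₂ : GPath sf rf v w) :
    ghostElem R sf rf (β₁.app β₂) * (realElem R sf rf β₁ * ghostElem R sf rf β₁)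
      = ghostElem R sf rf (β₁.app β₂) := by
  rw [gE_app, mul_assoc, gE_re_z, vx_mul_gE, ← gE_app]

end Separation

section Units
variable (R : Type*) [Ring R] {V Ed : Type*} [Finite V] [Finite Ed] (sf rf : Ed → V)

lemma EmEl_left (m : ℕ) : ∀ s ∈ componentZ R sf rf (m : ℤ), EmEl R sf rf m * s = s := by
  apply left_unit_on
  intro r u u' w α β hd
  have hm : m ≤ α.length := by omega
  obtain ⟨v, α₁, α₂, hlen, htake, happ⟩ := path_split α m hm
  subst happ
  rw [EmEl, Finset.sum_mul]
  refine (Finset.sum_eq_single (⟨u, v, α₁⟩ : PathIdx sf rf) ?_ ?_).trans ?_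
  · rintro ⟨ub, wb, pb⟩ hbmem hbne
    rw [mem_EmSet] at hbmem
    have hz : ghostElem R sf rf pb * realElem R sf rf (α₁.app α₂) = 0 :=
      emleft_zero pb hbmem α₁ α₂ hlen hbne
    rw [ofR_swap (ofR_mul_re_gE pb pb), mul_assoc (realElem R sf rf pb),
      ← mul_assoc (ghostElem R sf rf pb), hz, zero_mul, mul_zero, mul_zero]
  · intro ha
    exact absurd ((mem_EmSet sf rf).mpr hlen) ha
  · rw [ofR_swap (ofR_mul_re_gE α₁ α₁), absorb_left]

lemma EmEl_right (m : ℕ) : ∀ s ∈ componentZ R sf rf (-(m : ℤ)), s * EmEl R sf rf m = s := by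
  apply right_unit_on
  intro r u u' w α β hd
  have hm : m ≤ β.length := by omega
  obtain ⟨v, β₁, β₂, hlen, htake, happ⟩ := path_split β m hm
  subst happ
  rw [EmEl, Finset.mul_sum]
  refine (Finset.sum_eq_single (⟨u', v, β₁⟩ : PathIdx sf rf) ?_ ?_).trans ?_
  · rintro ⟨ub, wb, pb⟩ hbmem hbne
    rw [mem_EmSet] at hbmem
    have hz : ghostElem R sf rf (β₁.app β₂) * realElem R sf rf pb = 0 :=
      emright_zero β₁ β₂ hlen pb hbmem hbne
    rw [mul_assoc, mul_assoc (realElem R sf rf α), ← mul_assoc (ghostElem R sf rf (β₁.app β₂)),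
      hz, zero_mul, mul_zero, mul_zero]
  · intro ha
    exact absurd ((mem_EmSet sf rf).mpr hlen) ha
  · rw [mul_assoc, mul_assoc (realElem R sf rf α), absorb_right]

lemma FmEl_right (m : ℕ) : ∀ s ∈ componentZ R sf rf (m : ℤ), s * FmEl R sf rf m = s := by
  apply right_unit_on
  intro r u u' w α β hd
  have hg : Good sf rf (β.length + m) w := ⟨u, α, by omega⟩
  obtain ⟨w₂, β₁, σ, hmem, happ⟩ := exists_mingood_prefix β hg
  subst happ
  rw [FmEl, Finset.mul_sum]
  refine (Finset.sum_eq_single (⟨u', w₂, β₁⟩ : PathIdx sf rf) ?_ ?_).trans ?_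
  · rintro ⟨ub, wb, pb⟩ hbmem hbne
    rw [mem_FmSet] at hbmem
    have hz : ghostElem R sf rf (β₁.app σ) * realElem R sf rf pb = 0 :=
      fmright_zero hmem hbmem hbne hg
    rw [mul_assoc, mul_assoc (realElem R sf rf α), ← mul_assoc (ghostElem R sf rf (β₁.app σ)),
      hz, zero_mul, mul_zero, mul_zero]
  · intro ha
    exact absurd ((mem_FmSet sf rf).mpr hmem) ha
  · rw [mul_assoc, mul_assoc (realElem R sf rf α), absorb_right]

lemma FmEl_left (m : ℕ) : ∀ s ∈ componentZ R sf rf (-(m : ℤ)), FmEl R sf rf m * s = s := by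
  apply left_unit_on
  intro r u u' w α β hd
  have hg : Good sf rf (α.length + m) w := ⟨u', β, by omega⟩
  obtain ⟨w₂, α₁, σ, hmem, happ⟩ := exists_mingood_prefix α hg
  subst happ
  rw [FmEl, Finset.sum_mul]
  refine (Finset.sum_eq_single (⟨u, w₂, α₁⟩ : PathIdx sf rf) ?_ ?_).trans ?_
  · rintro ⟨ub, wb, pb⟩ hbmem hbne
    rw [mem_FmSet] at hbmem
    have hz : ghostElem R sf rf pb * realElem R sf rf (α₁.app σ) = 0 :=
      fmleft_zero hmem hbmem hbne hg
    rw [ofR_swap (ofR_mul_re_gE pb pb), mul_assoc (realElem R sf rf pb),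
      ← mul_assoc (ghostElem R sf rf pb), hz, zero_mul, mul_zero, mul_zero]
  · intro ha
    exact absurd ((mem_FmSet sf rf).mpr hmem) ha
  · rw [ofR_swap (ofR_mul_re_gE α₁ α₁), absorb_left]

end Units

end LPA

open LPA in
/-- If `E` is a finite directed graph and `R` an associative unital ring,
then `L_R(E)`, with its canonical `ℤ`-gradation, is epsilon-strongly `ℤ`-graded: for every
`n ∈ ℤ` there exist `ε ∈ S_n S_{-n}` and `ε' ∈ S_{-n} S_n` with `ε s = s` and `s ε' = s`
for all `s ∈ S_n`. -/
theorem leavitt_finite_epsilonStrongly_int (R : Type*) [Ring R] {V Ed : Type*}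
    [Finite V] [Finite Ed] (sf rf : Ed → V) :
    ∀ n : ℤ, ∃ ε ∈ sgMul (componentZ R sf rf n) (componentZ R sf rf (-n)),
      ∃ ε' ∈ sgMul (componentZ R sf rf (-n)) (componentZ R sf rf n),
        ∀ s ∈ componentZ R sf rf n, ε * s = s ∧ s * ε' = s := by
  intro n
  rcases le_or_gt 0 n with hn | hn
  · obtain ⟨m, rfl⟩ : ∃ m : ℕ, n = (m : ℤ) := ⟨n.toNat, (Int.toNat_of_nonneg hn).symm⟩
    refine ⟨EmEl R sf rf m, ?_, FmEl R sf rf m, ?_,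
      fun s hs => ⟨EmEl_left R sf rf m s hs, FmEl_right R sf rf m s hs⟩⟩
    · exact EmEl_mem R sf rf m
    · exact FmEl_mem R sf rf m
  · obtain ⟨m, rfl⟩ : ∃ m : ℕ, n = -(m : ℤ) := ⟨(-n).toNat, by omega⟩
    refine ⟨FmEl R sf rf m, ?_, EmEl R sf rf m, ?_,
      fun s hs => ⟨FmEl_left R sf rf m s hs, EmEl_right R sf rf m s hs⟩⟩
    · rw [neg_neg]
      exact FmEl_mem R sf rf m
    · rw [neg_neg]
      exact EmEl_mem R sf rf m
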